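/- Let X be a nonempty finite type, T ≥ 1, r : X → ℝ, α > 0, and p^pre a positive pretrained policy sequence with soft value functions v_t and soft-optimal policy sequence p*. Then for every positive policy sequence p^θ and every initial distribution μ on X, J(p^θ) := E_{P^{p^θ}_μ}[r(x_0)] − α · Σ_{t=1}^{T} E_{P^{p^θ}_μ}[KL(p^θ_{t-1}(·|x_t) ‖ p^pre_{t-1}(·|x_t))] = Σ_{x_T} μ(x_T) v_T(x_T) − α · KL(P^{p^θ}_μ ‖ P^{p*}_μ), where the last KL divergence is between the two joint trajectory distributions on X^{T+1}. -/

import Mathlib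

open Real

/-- KL divergence between two mass functions on a finite type, with the
convention `0 * log 0 = 0` (automatic, since `0 * _ = 0` in `ℝ`). -/
noncomputable def KLd {Y : Type*} [Fintype Y] (p q : Y → ℝ) : ℝ :=
  ∑ y, p y * Real.log (p y / q y)

/-- Product of transition probabilities along a trajectory `(x_{t-1}, …, x_0)`
(encoded as `y : Fin t → X`, with `y i = x_i`) starting from `x_t = x`:
`∏_{s=t}^{1} p_{s-1}(x_{s-1} | x_s)`. -/
noncomputable def chainProd {X : Type*} (p : ℕ → X → X → ℝ) (t : ℕ) (x : X)
    (y : Fin t → X) : ℝ :=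
  ∏ s : Fin t, p s (if h : (s : ℕ) + 1 < t then y ⟨(s : ℕ) + 1, h⟩ else x) (y s)

/-- The soft value functions: `v_0 = r` and, for `t ≥ 1`,
`v_t(x) = α * log ∑_{x_{t-1},…,x_0} (∏_{s=t}^{1} p_{s-1}(x_{s-1}|x_s)) exp(r(x_0)/α)`. -/
noncomputable def softValue {X : Type*} [Fintype X] (p : ℕ → X → X → ℝ) (r : X → ℝ)
    (α : ℝ) : ℕ → X → ℝ
  | 0, x => r x
  | (t + 1), x =>
      α * Real.log (∑ y : Fin (t + 1) → X,
        chainProd p (t + 1) x y * Real.exp (r (y 0) / α))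

/-- The soft-optimal policy
`p*_{t-1}(y|x) = p^pre_{t-1}(y|x) * exp(v_{t-1}(y)/α) / exp(v_t(x)/α)`.
The index `t : ℕ` here stands for `t-1`, so it uses `v_t` and `v_{t+1}`. -/
noncomputable def softOpt {X : Type*} [Fintype X] (p : ℕ → X → X → ℝ) (r : X → ℝ)
    (α : ℝ) (t : ℕ) (x y : X) : ℝ :=
  p t x y * Real.exp (softValue p r α t y / α) / Real.exp (softValue p r α (t + 1) x / α)

/-- The joint trajectory distribution
`P^q_μ(x_T,…,x_0) = μ(x_T) * ∏_{t=T}^{1} q_{t-1}(x_{t-1}|x_t)`, a trajectory being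
encoded as `x : Fin (T+1) → X` with `x i = x_i` (so `x (Fin.last T) = x_T`). -/
noncomputable def trajProb {X : Type*} (μ : X → ℝ) (q : ℕ → X → X → ℝ) (T : ℕ)
    (x : Fin (T + 1) → X) : ℝ :=
  μ (x (Fin.last T)) * ∏ t : Fin T, q t (x t.succ) (x t.castSucc)

/-- Expectation of `f` under the joint trajectory distribution `P^q_μ`. -/
noncomputable def trajExp {X : Type*} [Fintype X] (μ : X → ℝ) (q : ℕ → X → X → ℝ)
    (T : ℕ) (f : (Fin (T + 1) → X) → ℝ) : ℝ :=
  ∑ x : Fin (T + 1) → X, trajProb μ q T x * f x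

/-- `q` is a policy sequence for horizon `T`: for each `t < T` (our index `t`
stands for `t-1` with `1 ≤ t ≤ T`), `q t x ·` is a probability mass function. -/
def IsPolicy {X : Type*} [Fintype X] (T : ℕ) (q : ℕ → X → X → ℝ) : Prop :=
  ∀ t < T, ∀ x : X, (∀ y : X, 0 ≤ q t x y) ∧ (∑ y, q t x y) = 1

/-- A policy sequence is positive if all its transition probabilities are positive. -/
def IsPositive {X : Type*} (T : ℕ) (q : ℕ → X → X → ℝ) : Prop :=
  ∀ t < T, ∀ x y : X, 0 < q t x y

/-! ### Auxiliary lemmas -/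

/-- Equivalence between `X × (Fin n → X)` and `Fin (n+1) → X` by `snoc`. -/
def snocEquiv (X : Type*) (n : ℕ) : X × (Fin n → X) ≃ (Fin (n + 1) → X) where
  toFun p := Fin.snoc p.2 p.1
  invFun x := (x (Fin.last n), Fin.init x)
  left_inv p := by simp
  right_inv x := by simp

lemma sum_pi_snoc {X : Type*} [Fintype X] {n : ℕ} (F : (Fin (n + 1) → X) → ℝ) :
    ∑ x : Fin (n + 1) → X, F x = ∑ a : X, ∑ y : Fin n → X, F (Fin.snoc y a) := by
  rw [← Equiv.sum_comp (snocEquiv X n) F, Fintype.sum_prod_type]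
  rfl

lemma trajProb_snoc {X : Type*} (ν : X → ℝ) (q : ℕ → X → X → ℝ) (n : ℕ)
    (y : Fin (n + 1) → X) (a : X) :
    trajProb ν q (n + 1) (Fin.snoc y a) = trajProb (fun b => ν a * q n a b) q n y := by
  unfold trajProb
  rw [Fin.prod_univ_castSucc]
  have h1 : ∀ i : Fin n, (Fin.snoc y a : Fin (n+2) → X) i.castSucc.succ = y i.succ := by
    intro i; rw [Fin.succ_castSucc, Fin.snoc_castSucc]
  have h2 : ∀ i : Fin n, (Fin.snoc y a : Fin (n+2) → X) i.castSucc.castSucc = y i.castSucc := by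
    intro i; rw [Fin.snoc_castSucc]
  have h3 : (Fin.snoc y a : Fin (n+2) → X) (Fin.last (n+1)) = a := Fin.snoc_last _ _
  have h4 : (Fin.snoc y a : Fin (n+2) → X) (Fin.last n).succ = a := by
    rw [Fin.succ_last]; exact h3
  have h5 : (Fin.snoc y a : Fin (n+2) → X) (Fin.last n).castSucc = y (Fin.last n) :=
    Fin.snoc_castSucc _ _ _
  rw [h3, h4, h5]
  rw [Finset.prod_congr rfl (fun i _ => by rw [h1 i, h2 i])]
  simp only [Fin.coe_castSucc, Fin.val_last]
  ring

lemma trajProb_mul_last {X : Type*} (ν f : X → ℝ) (q : ℕ → X → X → ℝ) (n : ℕ)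
    (x : Fin (n + 1) → X) :
    trajProb (fun b => ν b * f b) q n x = trajProb ν q n x * f (x (Fin.last n)) := by
  unfold trajProb; ring

lemma sum_trajProb {X : Type*} [Fintype X] (n : ℕ) :
    ∀ (ν : X → ℝ) (q : ℕ → X → X → ℝ),
    (∀ t < n, ∀ x : X, (∑ y, q t x y) = 1) →
    ∑ x : Fin (n + 1) → X, trajProb ν q n x = ∑ b, ν b := by
  induction n with
  | zero =>
    intro ν q _
    rw [sum_pi_snoc]
    have h : ∀ a : X, ∀ y : Fin 0 → X, trajProb ν q 0 (Fin.snoc y a) = ν a := by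
      intro a y
      unfold trajProb
      rw [Fin.snoc_last]
      simp
    simp only [h]
    simp
  | succ n ih =>
    intro ν q hq
    rw [sum_pi_snoc]
    have : ∀ a : X, ∑ y : Fin (n+1) → X, trajProb ν q (n+1) (Fin.snoc y a) = ν a := by
      intro a
      calc ∑ y : Fin (n+1) → X, trajProb ν q (n+1) (Fin.snoc y a)
          = ∑ y : Fin (n+1) → X, trajProb (fun b => ν a * q n a b) q n y :=
            Finset.sum_congr rfl fun y _ => trajProb_snoc ν q n y a
        _ = ∑ b, ν a * q n a b := ih _ q (fun t ht x => hq t (by omega) x)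
        _ = ν a := by rw [← Finset.mul_sum, hq n (by omega) a, mul_one]
    rw [Finset.sum_congr rfl fun a _ => this a]

lemma resample {X : Type*} [Fintype X] (n : ℕ) :
    ∀ (ν : X → ℝ) (q : ℕ → X → X → ℝ),
    (∀ t < n, ∀ x : X, (∑ y, q t x y) = 1) → ∀ (t : Fin n) (g : X → X → ℝ),
    ∑ x : Fin (n + 1) → X, trajProb ν q n x * g (x t.succ) (x t.castSucc)
      = ∑ x : Fin (n + 1) → X, trajProb ν q n x * ∑ y, q t (x t.succ) y * g (x t.succ) y := by
  induction n with
  | zero => intro _ _ _ t; exact t.elim0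
  | succ n ih =>
    intro ν q hq t g
    induction t using Fin.lastCases with
    | last =>
      rw [sum_pi_snoc (F := fun x => trajProb ν q (n+1) x * g (x (Fin.last n).succ) (x (Fin.last n).castSucc)),
          sum_pi_snoc (F := fun x => trajProb ν q (n+1) x * ∑ y, q ↑(Fin.last n) (x (Fin.last n).succ) y * g (x (Fin.last n).succ) y)]
      apply Finset.sum_congr rfl
      intro a _
      have e1 : ∀ y : Fin (n+1) → X, (Fin.snoc y a : Fin (n+2) → X) (Fin.last n).succ = a := by
        intro y; rw [Fin.succ_last]; exact Fin.snoc_last _ _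
      have e2 : ∀ y : Fin (n+1) → X, (Fin.snoc y a : Fin (n+2) → X) (Fin.last n).castSucc = y (Fin.last n) :=
        fun y => Fin.snoc_castSucc _ _ _
      calc ∑ y : Fin (n+1) → X, trajProb ν q (n+1) (Fin.snoc y a) *
              g ((Fin.snoc y a : Fin (n+2) → X) (Fin.last n).succ) ((Fin.snoc y a : Fin (n+2) → X) (Fin.last n).castSucc)
          = ∑ y : Fin (n+1) → X, trajProb (fun b => (ν a * q n a b) * g a b) q n y := by
            refine Finset.sum_congr rfl fun y _ => ?_
            rw [e1, e2, trajProb_snoc, ← trajProb_mul_last]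
        _ = ∑ b, (ν a * q n a b) * g a b := sum_trajProb n _ q (fun s hs x => hq s (by omega) x)
        _ = ν a * ∑ b, q n a b * g a b := by rw [Finset.mul_sum]; exact Finset.sum_congr rfl fun b _ => by ring
        _ = (∑ c, ν a * q n a c) * ∑ b, q n a b * g a b := by
            rw [← Finset.mul_sum, hq n (by omega) a, mul_one]
        _ = ∑ y : Fin (n+1) → X, trajProb (fun b => ν a * q n a b) q n y *
              ∑ b, q n a b * g a b := by
            rw [← Finset.sum_mul, sum_trajProb n _ q (fun s hs x => hq s (by omega) x)]
        _ = ∑ y : Fin (n+1) → X, trajProb ν q (n+1) (Fin.snoc y a) *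
              ∑ b, q ↑(Fin.last n) ((Fin.snoc y a : Fin (n+2) → X) (Fin.last n).succ) b *
                g ((Fin.snoc y a : Fin (n+2) → X) (Fin.last n).succ) b := by
            refine Finset.sum_congr rfl fun y _ => ?_
            rw [e1, trajProb_snoc, Fin.val_last]
    | cast t' =>
      rw [sum_pi_snoc (F := fun x => trajProb ν q (n+1) x * g (x t'.castSucc.succ) (x t'.castSucc.castSucc)),
          sum_pi_snoc (F := fun x => trajProb ν q (n+1) x * ∑ y, q ↑t'.castSucc (x t'.castSucc.succ) y * g (x t'.castSucc.succ) y)]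
      apply Finset.sum_congr rfl
      intro a _
      have e1 : ∀ y : Fin (n+1) → X, (Fin.snoc y a : Fin (n+2) → X) t'.castSucc.succ = y t'.succ := by
        intro y; rw [Fin.succ_castSucc]; exact Fin.snoc_castSucc _ _ _
      have e2 : ∀ y : Fin (n+1) → X, (Fin.snoc y a : Fin (n+2) → X) t'.castSucc.castSucc = y t'.castSucc :=
        fun y => Fin.snoc_castSucc _ _ _
      calc ∑ y : Fin (n+1) → X, trajProb ν q (n+1) (Fin.snoc y a) *
              g ((Fin.snoc y a : Fin (n+2) → X) t'.castSucc.succ) ((Fin.snoc y a : Fin (n+2) → X) t'.castSucc.castSucc)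
          = ∑ y : Fin (n+1) → X, trajProb (fun b => ν a * q n a b) q n y * g (y t'.succ) (y t'.castSucc) := by
            refine Finset.sum_congr rfl fun y _ => ?_
            rw [e1, e2, trajProb_snoc]
        _ = ∑ y : Fin (n+1) → X, trajProb (fun b => ν a * q n a b) q n y *
              ∑ b, q ↑t' (y t'.succ) b * g (y t'.succ) b :=
            ih _ q (fun s hs x => hq s (by omega) x) t' g
        _ = _ := by
            refine Finset.sum_congr rfl fun y _ => ?_
            rw [e1, trajProb_snoc, Fin.coe_castSucc]

/-- Telescoping identity: the soft-optimal trajectory probability in terms of the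
pretrained one. -/
lemma traj_softOpt {X : Type*} [Fintype X] (ppre : ℕ → X → X → ℝ) (r : X → ℝ)
    (α : ℝ) (μ : X → ℝ) (T : ℕ) (x : Fin (T + 1) → X) :
    trajProb μ (fun t a b => softOpt ppre r α t a b) T x
      = trajProb μ ppre T x *
        Real.exp ((r (x 0) - softValue ppre r α T (x (Fin.last T))) / α) := by
  unfold trajProb
  have hfac : ∀ t : Fin T, softOpt ppre r α ↑t (x t.succ) (x t.castSucc)
      = ppre ↑t (x t.succ) (x t.castSucc) *
        Real.exp (softValue ppre r α ↑t (x t.castSucc) / α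
          - softValue ppre r α (↑t + 1) (x t.succ) / α) := by
    intro t
    unfold softOpt
    rw [mul_div_assoc, ← Real.exp_sub]
  rw [Finset.prod_congr rfl fun t _ => hfac t, Finset.prod_mul_distrib, ← Real.exp_sum]
  set F : ℕ → ℝ := fun i => if h : i < T + 1 then softValue ppre r α i (x ⟨i, h⟩) / α else 0
    with hF
  have hsum : (∑ t : Fin T, (softValue ppre r α ↑t (x t.castSucc) / α
      - softValue ppre r α (↑t + 1) (x t.succ) / α)) = F 0 - F T := by
    have step : ∀ t : Fin T, (softValue ppre r α ↑t (x t.castSucc) / α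
        - softValue ppre r α (↑t + 1) (x t.succ) / α) = F ↑t - F (↑t + 1) := by
      intro t
      have hlt1 : (t : ℕ) < T + 1 := by omega
      have hlt2 : (t : ℕ) + 1 < T + 1 := by omega
      have e1 : F ↑t = softValue ppre r α ↑t (x t.castSucc) / α := by
        rw [hF]; simp only; rw [dif_pos hlt1]
        congr 1
      have e2 : F (↑t + 1) = softValue ppre r α (↑t + 1) (x t.succ) / α := by
        rw [hF]; simp only; rw [dif_pos hlt2]
        congr 1
      rw [e1, e2]
    rw [Finset.sum_congr rfl fun t _ => step t]
    rw [Fin.sum_univ_eq_sum_range (fun i => F i - F (i + 1)) T]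
    exact Finset.sum_range_sub' F T
  rw [hsum]
  have hF0 : F 0 = r (x 0) / α := by
    rw [hF]; simp only; rw [dif_pos (by omega : 0 < T + 1)]
    have : (⟨0, by omega⟩ : Fin (T + 1)) = 0 := rfl
    rw [this]
    rfl
  have hFT : F T = softValue ppre r α T (x (Fin.last T)) / α := by
    rw [hF]; simp only; rw [dif_pos (by omega : T < T + 1)]
    rfl
  rw [hF0, hFT, div_sub_div_same]
  ring

/-- the entropy-regularized objective `J(p^θ)` equals
`∑_{x_T} μ(x_T) v_T(x_T) − α · KL(P^{p^θ}_μ ‖ P^{p*}_μ)`, where the last KL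
divergence is between the two joint trajectory distributions on `X^{T+1}`. -/
theorem statement1 {X : Type*} [Fintype X] [Nonempty X]
    (T : ℕ) (hT : 1 ≤ T) (r : X → ℝ) (α : ℝ) (hα : 0 < α)
    (ppre : ℕ → X → X → ℝ) (hpre : IsPolicy T ppre) (hprePos : IsPositive T ppre)
    (pθ : ℕ → X → X → ℝ) (hθ : IsPolicy T pθ) (hθPos : IsPositive T pθ)
    (μ : X → ℝ) (hμ0 : ∀ x, 0 ≤ μ x) (hμ1 : (∑ x, μ x) = 1) :
    trajExp μ pθ T (fun x => r (x 0))
        - α * ∑ t : Fin T, trajExp μ pθ T (fun x =>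
            KLd (fun y => pθ t (x t.succ) y) (fun y => ppre t (x t.succ) y))
      = (∑ x, μ x * softValue ppre r α T x)
        - α * KLd (fun x : Fin (T + 1) → X => trajProb μ pθ T x)
            (fun x : Fin (T + 1) → X =>
              trajProb μ (fun t x y => softOpt ppre r α t x y) T x) := by
  have hθsum : ∀ t < T, ∀ x : X, (∑ y, pθ t x y) = 1 := fun t ht x => (hθ t ht x).2
  have hμpos : ∀ x : Fin (T + 1) → X, trajProb μ pθ T x ≠ 0 → 0 < μ (x (Fin.last T)) := by
    intro x hx
    rcases (hμ0 (x (Fin.last T))).lt_or_eq with h | h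
    · exact h
    · exact absurd (by unfold trajProb; rw [← h]; ring) hx
  have hQpos : ∀ x : Fin (T + 1) → X, 0 < μ (x (Fin.last T)) → 0 < trajProb μ ppre T x := by
    intro x h
    exact mul_pos h (Finset.prod_pos fun t _ => hprePos t t.2 _ _)
  -- termwise chain rule for `KL(Pθ ‖ Ppre)`
  have hterm : ∀ x : Fin (T + 1) → X,
      trajProb μ pθ T x * Real.log (trajProb μ pθ T x / trajProb μ ppre T x)
      = ∑ t : Fin T, trajProb μ pθ T x *
          Real.log (pθ ↑t (x t.succ) (x t.castSucc) / ppre ↑t (x t.succ) (x t.castSucc)) := by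
    intro x
    by_cases hx : trajProb μ pθ T x = 0
    · simp [hx]
    · have hμx := hμpos x hx
      have hratio : trajProb μ pθ T x / trajProb μ ppre T x
          = ∏ t : Fin T, (pθ ↑t (x t.succ) (x t.castSucc) / ppre ↑t (x t.succ) (x t.castSucc)) := by
        unfold trajProb
        rw [Finset.prod_div_distrib, mul_div_mul_left _ _ hμx.ne']
      rw [hratio, Real.log_prod (s := Finset.univ)
        (f := fun t : Fin T => pθ ↑t (x t.succ) (x t.castSucc) / ppre ↑t (x t.succ) (x t.castSucc))
        (fun t _ => div_ne_zero (hθPos t t.2 _ _).ne' (hprePos t t.2 _ _).ne'),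
        Finset.mul_sum]
  -- chain rule (with resampling) for `KL(Pθ ‖ Ppre)`
  have hKpre : (∑ x : Fin (T + 1) → X, trajProb μ pθ T x *
        Real.log (trajProb μ pθ T x / trajProb μ ppre T x))
      = ∑ t : Fin T, trajExp μ pθ T (fun x =>
            KLd (fun y => pθ ↑t (x t.succ) y) (fun y => ppre ↑t (x t.succ) y)) := by
    rw [Finset.sum_congr rfl fun x _ => hterm x, Finset.sum_comm]
    refine Finset.sum_congr rfl fun t _ => ?_
    rw [resample T μ pθ hθsum t (fun a b => Real.log (pθ ↑t a b / ppre ↑t a b))]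
    rfl
  -- marginal of the initial state
  have hC : (∑ x : Fin (T + 1) → X, trajProb μ pθ T x *
        softValue ppre r α T (x (Fin.last T)))
      = ∑ a, μ a * softValue ppre r α T a := by
    rw [Finset.sum_congr rfl fun x _ =>
      (trajProb_mul_last μ (softValue ppre r α T) pθ T x).symm]
    exact sum_trajProb T _ pθ hθsum
  -- termwise comparison of the two KL integrands
  have hstar : ∀ x : Fin (T + 1) → X,
      α * (trajProb μ pθ T x * Real.log (trajProb μ pθ T x /
          trajProb μ (fun t a b => softOpt ppre r α t a b) T x))
      = α * (trajProb μ pθ T x * Real.log (trajProb μ pθ T x / trajProb μ ppre T x))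
        + trajProb μ pθ T x * softValue ppre r α T (x (Fin.last T))
        - trajProb μ pθ T x * r (x 0) := by
    intro x
    by_cases hx : trajProb μ pθ T x = 0
    · simp [hx]
    · have hq := hQpos x (hμpos x hx)
      rw [traj_softOpt]
      have hlog : Real.log (trajProb μ pθ T x / (trajProb μ ppre T x *
            Real.exp ((r (x 0) - softValue ppre r α T (x (Fin.last T))) / α)))
          = Real.log (trajProb μ pθ T x / trajProb μ ppre T x)
            - (r (x 0) - softValue ppre r α T (x (Fin.last T))) / α := by
        rw [← div_div, Real.log_div (div_ne_zero hx hq.ne') (Real.exp_ne_zero _),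
          Real.log_exp]
      rw [hlog]
      have hαc : α * ((r (x 0) - softValue ppre r α T (x (Fin.last T))) / α)
          = r (x 0) - softValue ppre r α T (x (Fin.last T)) := by
        field_simp
      linear_combination (- trajProb μ pθ T x) * hαc
  have hK : α * (∑ x : Fin (T + 1) → X, trajProb μ pθ T x *
        Real.log (trajProb μ pθ T x /
          trajProb μ (fun t a b => softOpt ppre r α t a b) T x))
      = α * (∑ x : Fin (T + 1) → X, trajProb μ pθ T x *
          Real.log (trajProb μ pθ T x / trajProb μ ppre T x))
        + (∑ x : Fin (T + 1) → X, trajProb μ pθ T x *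
            softValue ppre r α T (x (Fin.last T)))
        - (∑ x : Fin (T + 1) → X, trajProb μ pθ T x * r (x 0)) := by
    rw [Finset.mul_sum, Finset.sum_congr rfl fun x _ => hstar x,
      Finset.sum_sub_distrib, Finset.sum_add_distrib, ← Finset.mul_sum]
  have hgoalKL : KLd (fun x : Fin (T + 1) → X => trajProb μ pθ T x)
      (fun x : Fin (T + 1) → X => trajProb μ (fun t x y => softOpt ppre r α t x y) T x)
      = ∑ x : Fin (T + 1) → X, trajProb μ pθ T x *
          Real.log (trajProb μ pθ T x /
            trajProb μ (fun t a b => softOpt ppre r α t a b) T x) := rfl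
  have hgoalA : trajExp μ pθ T (fun x => r (x 0))
      = ∑ x : Fin (T + 1) → X, trajProb μ pθ T x * r (x 0) := rfl
  rw [hgoalKL, hgoalA, ← hKpre]
  linarith [hK, hC]
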